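/- Let (R, m, k) be a commutative local ring such that 2 is a unit in R, m is not isomorphic to R as an R-module, and End_R(m) is commutative and local. Then the map from Aut_R(R ⊕ m) to k* × Aut_R(m) sending a matrix (α_{ij}) to ([α₁₁(1)] mod m, α₁₁α₂₂ − α₂₁α₁₂) is a surjective group homomorphism whose kernel is the commutator subgroup; hence it induces an isomorphism Aut_R(R ⊕ m)_ab ≅ k* × Aut_R(m). -/

import Mathlib

open IsLocalRing

section Aux
variable {R : Type*} [CommRing R] [IsLocalRing R]

local notation "𝔪" => maximalIdeal R

def Aa (α : (R × 𝔪) ≃ₗ[R] (R × 𝔪)) : R := (α (1,0)).1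
def Cc (α : (R × 𝔪) ≃ₗ[R] (R × 𝔪)) : 𝔪 := (α (1,0)).2
def Bb (α : (R × 𝔪) ≃ₗ[R] (R × 𝔪)) : 𝔪 →ₗ[R] R :=
  (LinearMap.fst R R 𝔪) ∘ₗ (α.toLinearMap ∘ₗ LinearMap.inr R R 𝔪)
def Dd (α : (R × 𝔪) ≃ₗ[R] (R × 𝔪)) : Module.End R 𝔪 :=
  (LinearMap.snd R R 𝔪) ∘ₗ (α.toLinearMap ∘ₗ LinearMap.inr R R 𝔪)

theorem Bb_apply (α : (R × 𝔪) ≃ₗ[R] (R × 𝔪)) (x : 𝔪) : Bb α x = (α (0, x)).1 := rfl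
theorem Dd_apply (α : (R × 𝔪) ≃ₗ[R] (R × 𝔪)) (x : 𝔪) : Dd α x = (α (0, x)).2 := rfl

theorem alpha_apply (α : (R × 𝔪) ≃ₗ[R] (R × 𝔪)) (r : R) (x : 𝔪) :
    α (r, x) = (Aa α * r + Bb α x, r • Cc α + Dd α x) := by
  have h : (r, x) = r • ((1:R), (0:𝔪)) + ((0:R), x) := by ext <;> simp
  rw [h, map_add, map_smul]
  ext
  · simp [Aa, Bb_apply, mul_comm]
  · simp [Cc, Dd_apply]

/-- determinant as endomorphism of 𝔪 -/
def DetM (α : (R × 𝔪) ≃ₗ[R] (R × 𝔪)) : Module.End R 𝔪 :=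
  Aa α • Dd α - (LinearMap.toSpanSingleton R 𝔪 (Cc α)) ∘ₗ (Bb α)

theorem DetM_coe (α : (R × 𝔪) ≃ₗ[R] (R × 𝔪)) (x : 𝔪) :
    (DetM α x : R) = Aa α * (Dd α x : R) - Bb α x * (Cc α : R) := by
  simp [DetM, LinearMap.toSpanSingleton_apply, smul_eq_mul, mul_comm]

-- entries of a product
theorem Aa_mul (α β : (R × 𝔪) ≃ₗ[R] (R × 𝔪)) :
    Aa (α * β) = Aa α * Aa β + Bb α (Cc β) := by
  show (α (β (1,0))).1 = _
  rw [show β (1,0) = (Aa β, Cc β) from rfl, alpha_apply]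

theorem Cc_mul (α β : (R × 𝔪) ≃ₗ[R] (R × 𝔪)) :
    Cc (α * β) = Aa β • Cc α + Dd α (Cc β) := by
  show (α (β (1,0))).2 = _
  rw [show β (1,0) = (Aa β, Cc β) from rfl, alpha_apply]

theorem Bb_mul (α β : (R × 𝔪) ≃ₗ[R] (R × 𝔪)) (x : 𝔪) :
    Bb (α * β) x = Aa α * Bb β x + Bb α (Dd β x) := by
  show (α (β (0,x))).1 = _
  rw [show β (0,x) = (Bb β x, Dd β x) from rfl, alpha_apply]

theorem Dd_mul (α β : (R × 𝔪) ≃ₗ[R] (R × 𝔪)) (x : 𝔪) :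
    Dd (α * β) x = Bb β x • Cc α + Dd α (Dd β x) := by
  show (α (β (0,x))).2 = _
  rw [show β (0,x) = (Bb β x, Dd β x) from rfl, alpha_apply]

theorem smul_swap (f : Module.End R 𝔪) (x y : 𝔪) :
    (x : R) • f y = (y : R) • f x := by
  rw [← map_smul, ← map_smul]
  congr 1
  ext
  simp [mul_comm]

theorem hom_mem (hm : IsEmpty (𝔪 ≃ₗ[R] R)) (f : 𝔪 →ₗ[R] R) (x : 𝔪) :
    f x ∈ 𝔪 := by
  by_contra h
  have hu : IsUnit (f x) := by
    by_contra h'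
    exact h (mem_maximalIdeal (f x) |>.2 h')
  obtain ⟨v, hv⟩ := hu
  have hker : ∀ y : 𝔪, f y = 0 → y = 0 := by
    intro y hy
    have h1 : (y : R) • f x = (x : R) • f y := by
      rw [← map_smul, ← map_smul]; congr 1; ext; simp [mul_comm]
    rw [hy, smul_zero, ← hv] at h1
    have : (y : R) = 0 := by
      have h2 : (↑v : R) * (y : R) = 0 := by rw [mul_comm]; simpa using h1
      exact (Units.mul_right_eq_zero v).mp h2
    exact Subtype.ext this
  have hinj : Function.Injective f := by
    intro y z hyz
    have := hker (y - z) (by rw [map_sub, hyz, sub_self])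
    exact sub_eq_zero.mp this
  have hsurj : Function.Surjective f := by
    intro r
    refine ⟨(r * ↑v⁻¹) • x, ?_⟩
    rw [map_smul, smul_eq_mul, ← hv, mul_assoc, Units.inv_mul, mul_one]
  exact hm.false (LinearEquiv.ofBijective f ⟨hinj, hsurj⟩)

/-- corestriction of a map 𝔪 → R to 𝔪 -/
def cores (hm : IsEmpty (𝔪 ≃ₗ[R] R)) (f : 𝔪 →ₗ[R] R) : Module.End R 𝔪 :=
  LinearMap.codRestrict 𝔪 f (hom_mem hm f)

theorem key (hm : IsEmpty (𝔪 ≃ₗ[R] R))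
    (hcomm : ∀ f g : Module.End R 𝔪, f * g = g * f)
    (f : 𝔪 →ₗ[R] R) (g : Module.End R 𝔪) (u v : 𝔪) :
    f u * (g v : R) = f v * (g u : R) := by
  have h0 : ∀ w : 𝔪, f w = (cores hm f w : R) := fun w => rfl
  have h1 : (cores hm f u : R) • g v = (v : R) • g (cores hm f u) := smul_swap g _ _
  have h2 : g (cores hm f u) = cores hm f (g u) := by
    have := hcomm g (cores hm f)
    exact congrFun (congrArg (fun h => h.toFun) this) u
  have h3 : (v : R) • cores hm f (g u) = ((g u : R)) • cores hm f v := smul_swap _ _ _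
  have : (cores hm f u : R) • g v = ((g u : R)) • cores hm f v := by rw [h1, h2, h3]
  have hR := congrArg (Subtype.val) this
  simp only [SetLike.val_smul, smul_eq_mul] at hR
  rw [h0, h0, hR, mul_comm]

theorem DetM_mul (hm : IsEmpty (𝔪 ≃ₗ[R] R))
    (hcomm : ∀ f g : Module.End R 𝔪, f * g = g * f)
    (α β : (R × 𝔪) ≃ₗ[R] (R × 𝔪)) :
    DetM (α * β) = DetM α * DetM β := by
  ext x
  have hk := key hm hcomm (Bb α) (Dd α) (Cc β) (Dd β x)
  have hrhs : ((DetM α * DetM β) x : R) = Aa α * (Dd α (DetM β x) : R) - Bb α (DetM β x) * (Cc α : R) := DetM_coe α _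
  have hDet : DetM β x = Aa β • Dd β x - Bb β x • Cc β := by
    ext; rw [DetM_coe]; simp [smul_eq_mul, mul_comm]
  rw [hrhs, hDet]
  rw [DetM_coe, Aa_mul, Dd_mul α β x, Bb_mul α β x, Cc_mul]
  simp only [map_sub, map_smul, AddSubgroupClass.coe_sub, SetLike.val_smul, smul_eq_mul,
    Submodule.coe_add, map_add]
  linear_combination hk


theorem Aa_one : Aa (1 : (R × 𝔪) ≃ₗ[R] (R × 𝔪)) = 1 := rfl
theorem Cc_one : Cc (1 : (R × 𝔪) ≃ₗ[R] (R × 𝔪)) = 0 := rfl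
theorem Bb_one (x : 𝔪) : Bb (1 : (R × 𝔪) ≃ₗ[R] (R × 𝔪)) x = 0 := rfl
theorem Dd_one (x : 𝔪) : Dd (1 : (R × 𝔪) ≃ₗ[R] (R × 𝔪)) x = x := rfl

theorem DetM_one : DetM (1 : (R × 𝔪) ≃ₗ[R] (R × 𝔪)) = 1 := by
  ext x
  rw [DetM_coe, Aa_one, Bb_one, Dd_one]
  simp

theorem Aa_not_mem (hm : IsEmpty (𝔪 ≃ₗ[R] R)) (α : (R × 𝔪) ≃ₗ[R] (R × 𝔪)) :
    Aa α ∉ 𝔪 := by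
  intro hA
  have hone : (α (α.symm (1,0))).1 = 1 := by rw [α.apply_symm_apply]
  set v := α.symm (1,0) with hv
  have h1 : Aa α * v.1 + Bb α v.2 = 1 := by
    rw [← hone, show α v = α (v.1, v.2) from rfl, alpha_apply]
  have : (1:R) ∈ 𝔪 := by
    rw [← h1]
    exact Ideal.add_mem _ (Ideal.mul_mem_right _ _ hA) (hom_mem hm (Bb α) v.2)
  exact (Ideal.ne_top_iff_one _).mp (IsLocalRing.maximalIdeal.isMaximal R).ne_top this

theorem DetM_invcomp (hm : IsEmpty (𝔪 ≃ₗ[R] R))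
    (hcomm : ∀ f g : Module.End R 𝔪, f * g = g * f)
    (α β : (R × 𝔪) ≃ₗ[R] (R × 𝔪)) (h : α * β = 1) :
    DetM α ∘ₗ DetM β = LinearMap.id := by
  have h1 := DetM_mul hm hcomm α β
  rw [h, DetM_one] at h1
  exact h1.symm

/-- the determinant as an automorphism of 𝔪 -/
def DetE (hm : IsEmpty (𝔪 ≃ₗ[R] R))
    (hcomm : ∀ f g : Module.End R 𝔪, f * g = g * f)
    (α : (R × 𝔪) ≃ₗ[R] (R × 𝔪)) : 𝔪 ≃ₗ[R] 𝔪 :=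
  LinearEquiv.ofLinear (DetM α) (DetM α⁻¹)
    (DetM_invcomp hm hcomm α α⁻¹ (mul_inv_cancel α))
    (DetM_invcomp hm hcomm α⁻¹ α (inv_mul_cancel α))

theorem DetE_apply (hm : IsEmpty (𝔪 ≃ₗ[R] R))
    (hcomm : ∀ f g : Module.End R 𝔪, f * g = g * f)
    (α : (R × 𝔪) ≃ₗ[R] (R × 𝔪)) (x : 𝔪) :
    DetE hm hcomm α x = DetM α x := rfl

/-- the homomorphism δ -/
noncomputable def delta (hm : IsEmpty (𝔪 ≃ₗ[R] R))
    (hcomm : ∀ f g : Module.End R 𝔪, f * g = g * f) :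
    ((R × 𝔪) ≃ₗ[R] (R × 𝔪)) →* (ResidueField R)ˣ × (𝔪 ≃ₗ[R] 𝔪) where
  toFun α := (Units.mk0 (residue R (Aa α))
      (fun h0 => (Aa_not_mem hm α) (Ideal.Quotient.eq_zero_iff_mem.mp h0)),
    DetE hm hcomm α)
  map_one' := by
    refine Prod.ext (Units.ext ?_) (LinearEquiv.ext fun x => ?_)
    · show residue R (Aa 1) = 1
      rw [Aa_one, map_one]
    · show DetE hm hcomm 1 x = x
      rw [DetE_apply, DetM_one]
      rfl
  map_mul' α β := by
    refine Prod.ext (Units.ext ?_) (LinearEquiv.ext fun x => ?_)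
    · show residue R (Aa (α * β)) = residue R (Aa α) * residue R (Aa β)
      have hz : residue R (Bb α (Cc β)) = 0 :=
        Ideal.Quotient.eq_zero_iff_mem.mpr (hom_mem hm (Bb α) (Cc β))
      rw [Aa_mul, map_add, map_mul, hz, add_zero]
    · show DetE hm hcomm (α * β) x = DetE hm hcomm α (DetE hm hcomm β x)
      rw [DetE_apply, DetM_mul hm hcomm]
      rfl

section Elem

def Umap (β : 𝔪 →ₗ[R] R) : (R × 𝔪) →ₗ[R] (R × 𝔪) :=
  (LinearMap.fst R R 𝔪 + β ∘ₗ LinearMap.snd R R 𝔪).prod (LinearMap.snd R R 𝔪)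

theorem Umap_apply (β : 𝔪 →ₗ[R] R) (r : R) (x : 𝔪) : Umap β (r, x) = (r + β x, x) := rfl

def Lmap (c : 𝔪) : (R × 𝔪) →ₗ[R] (R × 𝔪) :=
  (LinearMap.fst R R 𝔪).prod
    ((LinearMap.toSpanSingleton R 𝔪 c) ∘ₗ LinearMap.fst R R 𝔪 + LinearMap.snd R R 𝔪)

theorem Lmap_apply (c : 𝔪) (r : R) (x : 𝔪) : Lmap c (r, x) = (r, r • c + x) := rfl

def Dmap (u : R) (v : R) : (R × 𝔪) →ₗ[R] (R × 𝔪) :=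
  (u • LinearMap.fst R R 𝔪).prod (v • LinearMap.snd R R 𝔪)

theorem Dmap_apply (u v : R) (r : R) (x : 𝔪) : Dmap u v (r, x) = (u * r, v • x) := rfl

/-- upper elementary automorphism -/
def Uel (β : 𝔪 →ₗ[R] R) : (R × 𝔪) ≃ₗ[R] (R × 𝔪) :=
  LinearEquiv.ofLinear (Umap β) (Umap (-β))
    (by
      apply LinearMap.ext; rintro ⟨r, x⟩
      simp [Umap_apply])
    (by
      apply LinearMap.ext; rintro ⟨r, x⟩
      simp [Umap_apply])

theorem Uel_apply (β : 𝔪 →ₗ[R] R) (r : R) (x : 𝔪) : Uel β (r, x) = (r + β x, x) := rfl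

theorem Uel_symm_apply (β : 𝔪 →ₗ[R] R) (r : R) (x : 𝔪) :
    (Uel β)⁻¹ (r, x) = (r - β x, x) := by
  show (Uel β).symm (r, x) = _
  rw [show (Uel β).symm (r,x) = Umap (-β) (r,x) from rfl, Umap_apply]
  simp [sub_eq_add_neg]

/-- lower elementary automorphism -/
def Lel (c : 𝔪) : (R × 𝔪) ≃ₗ[R] (R × 𝔪) :=
  LinearEquiv.ofLinear (Lmap c) (Lmap (-c))
    (by
      apply LinearMap.ext; rintro ⟨r, x⟩
      simp [Lmap_apply])
    (by
      apply LinearMap.ext; rintro ⟨r, x⟩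
      simp [Lmap_apply])

theorem Lel_apply (c : 𝔪) (r : R) (x : 𝔪) : Lel c (r, x) = (r, r • c + x) := rfl

theorem Lel_symm_apply (c : 𝔪) (r : R) (x : 𝔪) :
    (Lel c)⁻¹ (r, x) = (r, x - r • c) := by
  show (Lel c).symm (r, x) = _
  rw [show (Lel c).symm (r,x) = Lmap (-c) (r,x) from rfl, Lmap_apply]
  simp [sub_eq_add_neg, add_comm]

/-- diagonal automorphism -/
def Del (u v u' v' : R) (hu : u * u' = 1) (hv : v * v' = 1) :
    (R × 𝔪) ≃ₗ[R] (R × 𝔪) :=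
  LinearEquiv.ofLinear (Dmap u v) (Dmap u' v')
    (by
      apply LinearMap.ext; rintro ⟨r, x⟩
      simp [Dmap_apply, ← mul_assoc, ← mul_smul, hu, hv])
    (by
      apply LinearMap.ext; rintro ⟨r, x⟩
      simp [Dmap_apply, ← mul_assoc, ← mul_smul, mul_comm u' u, mul_comm v' v, hu, hv])

theorem Del_apply (u v u' v' : R) (hu : u * u' = 1) (hv : v * v' = 1) (r : R) (x : 𝔪) :
    Del u v u' v' hu hv (r, x) = (u * r, v • x) := rfl

theorem Del_symm_apply (u v u' v' : R) (hu : u * u' = 1) (hv : v * v' = 1) (r : R) (x : 𝔪) :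
    (Del u v u' v' hu hv)⁻¹ (r, x) = (u' * r, v' • x) := rfl

end Elem

section Comm
open scoped commutatorElement

theorem equiv_comm (hcomm : ∀ f g : Module.End R 𝔪, f * g = g * f)
    (e f : 𝔪 ≃ₗ[R] 𝔪) : e * f = f * e := by
  refine LinearEquiv.ext fun x => ?_
  have h := hcomm e.toLinearMap f.toLinearMap
  exact congrFun (congrArg (fun g => g.toFun) h) x

theorem Uel_mem_commutator (h2 : IsUnit (2:R)) (β : 𝔪 →ₗ[R] R) :
    Uel β ∈ commutator ((R × 𝔪) ≃ₗ[R] (R × 𝔪)) := by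
  obtain ⟨w, hw⟩ := h2
  have hu : (2:R) * ↑w⁻¹ = 1 := by rw [← hw]; exact w.mul_inv
  set T1 := Del (2:R) (1:R) ((↑w⁻¹ : R)) (1:R) hu (one_mul (1:R)) with hT1
  have hfact : Uel β = ⁅T1, Uel β⁆ := by
    rw [commutatorElement_def]
    refine LinearEquiv.ext fun v => ?_
    obtain ⟨r, x⟩ := v
    show Uel β (r, x) = T1 (Uel β (T1⁻¹ ((Uel β)⁻¹ (r, x))))
    rw [Uel_symm_apply, Del_symm_apply, Uel_apply, Del_apply, Uel_apply]
    ext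
    · show r + β x = 2 * (↑w⁻¹ * (r - β x) + β ((1:R) • x))
      rw [one_smul]
      linear_combination (β x - r) * hu
    · simp
  rw [hfact, commutator_def]
  exact Subgroup.commutator_mem_commutator (Subgroup.mem_top _) (Subgroup.mem_top _)

theorem Lel_mem_commutator (h2 : IsUnit (2:R)) (c : 𝔪) :
    Lel c ∈ commutator ((R × 𝔪) ≃ₗ[R] (R × 𝔪)) := by
  obtain ⟨w, hw⟩ := h2
  have hu : (2:R) * ↑w⁻¹ = 1 := by rw [← hw]; exact w.mul_inv
  set T2 := Del (1:R) (2:R) (1:R) ((↑w⁻¹ : R)) (one_mul (1:R)) hu with hT2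
  have hfact : Lel c = ⁅T2, Lel c⁆ := by
    rw [commutatorElement_def]
    refine LinearEquiv.ext fun v => ?_
    obtain ⟨r, x⟩ := v
    show Lel c (r, x) = T2 (Lel c (T2⁻¹ ((Lel c)⁻¹ (r, x))))
    rw [Lel_symm_apply, Del_symm_apply, Lel_apply, Del_apply, Lel_apply]
    ext
    · simp
    · push_cast [smul_eq_mul]
      linear_combination (r * (c:R) - (x:R)) * hu
  rw [hfact, commutator_def]
  exact Subgroup.commutator_mem_commutator (Subgroup.mem_top _) (Subgroup.mem_top _)

end Comm

theorem Del_mem_commutator (h2 : IsUnit (2:R)) (A A' : R) (hA : A * A' = 1)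
    (hA' : A' * A = 1) (ht : A - 1 ∈ 𝔪) :
    Del A A' A' A hA hA' ∈ commutator ((R × 𝔪) ≃ₗ[R] (R × 𝔪)) := by
  set t : 𝔪 := ⟨A - 1, ht⟩ with htdef
  have hfact : Del A A' A' A hA hA'
      = Lel (-(A' • t)) * Uel (Submodule.subtype 𝔪) * Lel t
        * Uel (-(A' • Submodule.subtype 𝔪)) := by
    refine LinearEquiv.ext fun v => ?_
    obtain ⟨r, x⟩ := v
    show Del A A' A' A hA hA' (r, x)
      = Lel (-(A' • t)) (Uel (Submodule.subtype 𝔪) (Lel t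
          (Uel (-(A' • Submodule.subtype 𝔪)) (r, x))))
    rw [Del_apply, Uel_apply, Lel_apply, Uel_apply, Lel_apply]
    have hc : ((t : R)) = A - 1 := rfl
    simp only [LinearMap.neg_apply, LinearMap.smul_apply, Submodule.subtype_apply, smul_eq_mul]
    ext
    · push_cast [smul_eq_mul, hc]
      linear_combination (x : R) * hA
    · push_cast [smul_eq_mul, hc]
      linear_combination ((r - A' * (x:R)) * (A - 1) + (x:R)) * hA
  rw [hfact]
  exact Subgroup.mul_mem _
    (Subgroup.mul_mem _
      (Subgroup.mul_mem _ (Lel_mem_commutator h2 _) (Uel_mem_commutator h2 _))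
      (Lel_mem_commutator h2 _))
    (Uel_mem_commutator h2 _)

theorem mem_commutator_of_ker (h2 : IsUnit (2:R)) (hm : IsEmpty (𝔪 ≃ₗ[R] R))
    (α : (R × 𝔪) ≃ₗ[R] (R × 𝔪)) (h1 : residue R (Aa α) = 1)
    (hdet : ∀ x : 𝔪, ((DetM α x : R)) = x) :
    α ∈ commutator ((R × 𝔪) ≃ₗ[R] (R × 𝔪)) := by
  have hAnm := Aa_not_mem hm α
  have hAu : IsUnit (Aa α) := by
    by_contra h
    exact hAnm ((mem_maximalIdeal _).2 h)
  obtain ⟨w, hw⟩ := hAu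
  have hAA' : Aa α * (↑w⁻¹ : R) = 1 := by rw [← hw]; exact w.mul_inv
  have hA'A : (↑w⁻¹ : R) * Aa α = 1 := by rw [← hw]; exact w.inv_mul
  have hAm : Aa α - 1 ∈ 𝔪 := by
    refine Ideal.Quotient.eq_zero_iff_mem.mp ?_
    show residue R (Aa α - 1) = 0
    rw [map_sub, h1, map_one, sub_self]
  have hfact : α = Lel ((↑w⁻¹ : R) • Cc α) * Del (Aa α) (↑w⁻¹ : R) (↑w⁻¹ : R) (Aa α) hAA' hA'A
      * Uel ((↑w⁻¹ : R) • Bb α) := by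
    refine LinearEquiv.ext fun v => ?_
    obtain ⟨r, x⟩ := v
    show α (r, x) = Lel _ (Del _ _ _ _ hAA' hA'A (Uel _ (r, x)))
    rw [Uel_apply, Del_apply, Lel_apply, alpha_apply]
    have hd : Aa α * (Dd α x : R) - Bb α x * (Cc α : R) = (x : R) := by
      rw [← DetM_coe]; exact hdet x
    simp only [LinearMap.smul_apply, smul_eq_mul]
    ext
    · push_cast [smul_eq_mul]
      linear_combination (-(Bb α x)) * hAA'
    · push_cast [smul_eq_mul]
      linear_combination (-(r * (Cc α : R)) - (Dd α x : R)
        - (↑w⁻¹ : R) * Bb α x * (Cc α : R)) * hAA' + (↑w⁻¹ : R) * hd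
  rw [hfact]
  exact Subgroup.mul_mem _
    (Subgroup.mul_mem _ (Lel_mem_commutator h2 _) (Del_mem_commutator h2 _ _ hAA' hA'A hAm))
    (Uel_mem_commutator h2 _)

theorem stmt_11' {R : Type*} [CommRing R] [IsLocalRing R]
    (h2 : IsUnit (2 : R))
    (hm : IsEmpty ((maximalIdeal R) ≃ₗ[R] R))
    (hcomm : ∀ f g : Module.End R (maximalIdeal R), f * g = g * f) :
    ∃ δ : ((R × maximalIdeal R) ≃ₗ[R] (R × maximalIdeal R)) →*
        (ResidueField R)ˣ × ((maximalIdeal R) ≃ₗ[R] (maximalIdeal R)),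
      (∀ α : (R × maximalIdeal R) ≃ₗ[R] (R × maximalIdeal R),
        ((δ α).1 : ResidueField R) = residue R (α (1, 0)).1) ∧
      (∀ (α : (R × maximalIdeal R) ≃ₗ[R] (R × maximalIdeal R)) (x : maximalIdeal R),
        (((δ α).2 x : R))
          = (α (((α (0, x)).2 : R), 0)).1 - ((α ((α (0, x)).1, 0)).2 : R)) ∧
      Function.Surjective δ ∧
      δ.ker = commutator ((R × maximalIdeal R) ≃ₗ[R] (R × maximalIdeal R)) := by
  refine ⟨delta hm hcomm, fun α => rfl, ?_, ?_, ?_⟩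
  · intro α x
    have h0 : α (0, x) = (Bb α x, Dd α x) := by
      rw [alpha_apply]; simp
    have h1 : α ((Dd α x : R), 0) = (Aa α * (Dd α x : R), (Dd α x : R) • Cc α) := by
      rw [alpha_apply]; simp
    have h2' : α (Bb α x, 0) = (Aa α * Bb α x, Bb α x • Cc α) := by
      rw [alpha_apply]; simp
    show (DetM α x : R) = _
    rw [DetM_coe, h0]
    show _ = (α ((Dd α x : R), 0)).1 - ((α (Bb α x, 0)).2 : R)
    rw [h1, h2']
    push_cast [smul_eq_mul]
    ring
  · rintro ⟨u, ψ⟩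
    obtain ⟨a, ha⟩ := IsLocalRing.residue_surjective (R := R) (u : ResidueField R)
    have hanm : a ∉ maximalIdeal R := by
      intro h
      exact u.ne_zero (by rw [← ha]; exact Ideal.Quotient.eq_zero_iff_mem.mpr h)
    have hAu : IsUnit a := by
      by_contra h
      exact hanm ((mem_maximalIdeal _).2 h)
    obtain ⟨w, hw⟩ := hAu
    have haa' : a * (↑w⁻¹ : R) = 1 := by rw [← hw]; exact w.mul_inv
    have ha'a : (↑w⁻¹ : R) * a = 1 := by rw [← hw]; exact w.inv_mul
    set P : (R × maximalIdeal R) ≃ₗ[R] (R × maximalIdeal R) :=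
      LinearEquiv.prodCongr (LinearEquiv.refl R R) ψ with hP
    set α := Del a (↑w⁻¹ : R) (↑w⁻¹ : R) a haa' ha'a * P with hα
    refine ⟨α, ?_⟩
    have h10 : α (1, 0) = (a, 0) := by
      show Del a (↑w⁻¹ : R) (↑w⁻¹ : R) a haa' ha'a (P (1, 0)) = _
      have : P ((1:R), (0:maximalIdeal R)) = (1, 0) := by
        simp [hP]
      rw [this, Del_apply]
      simp
    have h0x : ∀ x : maximalIdeal R, α (0, x) = ((0:R), (↑w⁻¹ : R) • ψ x) := by
      intro x
      show Del a (↑w⁻¹ : R) (↑w⁻¹ : R) a haa' ha'a (P (0, x)) = _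
      have : P ((0:R), x) = (0, ψ x) := by simp [hP]
      rw [this, Del_apply]
      simp
    refine Prod.ext (Units.ext ?_) (LinearEquiv.ext fun x => Subtype.ext ?_)
    · show residue R (Aa α) = ↑u
      rw [show Aa α = a from by rw [Aa, h10], ha]
    · show (DetM α x : R) = (ψ x : R)
      rw [DetM_coe, show Aa α = a from by rw [Aa, h10],
        show Bb α x = 0 from by rw [Bb_apply, h0x],
        show Cc α = 0 from by rw [Cc, h10],
        show Dd α x = (↑w⁻¹ : R) • ψ x from by rw [Dd_apply, h0x]]
      push_cast [smul_eq_mul]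
      linear_combination (ψ x : R) * haa'
  · apply le_antisymm
    · intro α hα
      rw [MonoidHom.mem_ker] at hα
      have h1 : residue R (Aa α) = 1 := congrArg Units.val (congrArg Prod.fst hα)
      have h2'' : ((delta hm hcomm) α).2 = 1 := congrArg Prod.snd hα
      have hdet : ∀ x : maximalIdeal R, ((DetM α x : R)) = x := by
        intro x
        exact congrArg (fun e : (maximalIdeal R ≃ₗ[R] maximalIdeal R) => ((e x : R))) h2''
      exact mem_commutator_of_ker h2 hm α h1 hdet
    · rw [commutator_def]
      refine Subgroup.commutator_le.mpr fun g _ h _ => ?_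
      rw [MonoidHom.mem_ker, map_commutatorElement]
      refine commutatorElement_eq_one_iff_commute.mpr ?_
      exact Prod.ext (mul_comm _ _) (equiv_comm hcomm _ _)

end Aux

/-- Let `(R, m, k)` be a commutative local ring with `2` a unit, `m ≇ R`, and
`End_R(m)` commutative and local. The map `Aut_R(R ⊕ m) → k* × Aut_R(m)` sending `(α_{ij})` to
`([α₁₁(1)] mod m, α₁₁α₂₂ − α₂₁α₁₂)` is a surjective group homomorphism whose kernel is the
commutator subgroup; hence `Aut_R(R ⊕ m)_ab ≅ k* × Aut_R(m)`. The determinant, an endomorphism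
of `m`, is described by its values: for `x ∈ m`,
`(α₁₁α₂₂ − α₂₁α₁₂)(x) = α₁₁(α₂₂ x) − α₂₁(α₁₂ x)` computed inside `R`. -/
theorem stmt_11 {R : Type*} [CommRing R] [IsLocalRing R]
    (h2 : IsUnit (2 : R))
    (hm : IsEmpty ((maximalIdeal R) ≃ₗ[R] R))
    (hcomm : ∀ f g : Module.End R (maximalIdeal R), f * g = g * f)
    [IsLocalRing (Module.End R (maximalIdeal R))] :
    ∃ δ : ((R × maximalIdeal R) ≃ₗ[R] (R × maximalIdeal R)) →*
        (ResidueField R)ˣ × ((maximalIdeal R) ≃ₗ[R] (maximalIdeal R)),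
      (∀ α : (R × maximalIdeal R) ≃ₗ[R] (R × maximalIdeal R),
        ((δ α).1 : ResidueField R) = residue R (α (1, 0)).1) ∧
      (∀ (α : (R × maximalIdeal R) ≃ₗ[R] (R × maximalIdeal R)) (x : maximalIdeal R),
        (((δ α).2 x : R))
          = (α (((α (0, x)).2 : R), 0)).1 - ((α ((α (0, x)).1, 0)).2 : R)) ∧
      Function.Surjective δ ∧
      δ.ker = commutator ((R × maximalIdeal R) ≃ₗ[R] (R × maximalIdeal R)) := by
  exact stmt_11' h2 hm hcomm
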